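/- Let R be a principal ideal domain and let M be a k × n matrix over R. Then the cokernels of M and of its transpose are isomorphic as R-modules up to free summands; precisely, coker M ⊕ R^n ≅ coker Mᵀ ⊕ R^k as R-modules. In particular, if M is square (k = n) then coker M ≅ coker Mᵀ. -/

import Mathlib

open Matrix

section Aux
variable {R : Type*} [CommRing R]

/-- Splitting a pi type along a predicate, as a linear equivalence. -/
def piSplitLequiv {α : Type*} (p : α → Prop) [DecidablePred p] (B : α → Type*)
    [∀ x, AddCommGroup (B x)] [∀ x, Module R (B x)] :
    ((x : α) → B x) ≃ₗ[R] ((x : {a // p a}) → B x) × ((x : {a // ¬ p a}) → B x) :=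
  { Equiv.piEquivPiSubtypeProd p B with
    map_add' := fun _ _ => rfl
    map_smul' := fun _ _ => rfl }

lemma image_setOf_eq {α β : Type*} (f : β ↪ α) (a : β → R) (i : β) :
    a '' {i' | f i' = f i} = {a i} := by
  ext r
  constructor
  · rintro ⟨i', hi', rfl⟩
    simp only [Set.mem_setOf_eq] at hi'
    simp [f.injective hi']
  · rintro rfl
    exact ⟨i, by simp, rfl⟩

lemma image_setOf_empty {α β : Type*} (f : β ↪ α) (a : β → R) (j : α)
    (h : ¬ ∃ i, f i = j) : a '' {i' | f i' = j} = ∅ := by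
  ext r
  simp only [Set.mem_image, Set.mem_setOf_eq, Set.mem_empty_iff_false, iff_false]
  rintro ⟨i', hi', rfl⟩
  exact h ⟨i', hi'⟩

lemma span_diag_eq_pi {α β : Type*} [Fintype α] [DecidableEq α] (f : β ↪ α) (a : β → R) :
    Submodule.span R (Set.range fun i => a i • (Pi.single (f i) 1 : α → R)) =
      Submodule.pi Set.univ (fun x => Submodule.span R (a '' {i | f i = x})) := by
  classical
  apply le_antisymm
  · rw [Submodule.span_le]
    rintro _ ⟨i, rfl⟩
    intro x _
    simp only [Pi.smul_apply, smul_eq_mul, Pi.single_apply]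
    by_cases h : x = f i
    · rw [if_pos h, mul_one]
      exact Submodule.subset_span ⟨i, by simp [h], rfl⟩
    · rw [if_neg h, mul_zero]
      exact Submodule.zero_mem _
  · intro x hx
    have hxsum : x = ∑ j : α, Pi.single j (x j) := by
      simp [Finset.univ_sum_single]
    rw [hxsum]
    apply Submodule.sum_mem
    intro j _
    have hj := hx j (Set.mem_univ j)
    simp only [SetLike.mem_coe] at hj
    by_cases h : ∃ i, f i = j
    · obtain ⟨i, rfl⟩ := h
      rw [image_setOf_eq f a i] at hj
      obtain ⟨r, hr⟩ := Submodule.mem_span_singleton.mp hj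
      have : Pi.single (f i) (x (f i)) = r • (a i • (Pi.single (f i) 1 : α → R)) := by
        funext y
        by_cases hy : y = f i <;>
          simp [Pi.single_apply, hy, ← hr, smul_eq_mul, mul_comm, mul_assoc]
      rw [this]
      exact Submodule.smul_mem _ _ (Submodule.subset_span ⟨i, rfl⟩)
    · rw [image_setOf_empty f a j h] at hj
      rw [Submodule.span_empty, Submodule.mem_bot] at hj
      simp [hj]


/-- Cokernel of a "diagonal" submodule: the quotient of `α → R` by the span of
`a i • e_{f i}` splits into cyclic pieces and a free part. -/
noncomputable def cokerDiagLequiv {α β : Type*} [Fintype α] [DecidableEq α]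
    (f : β ↪ α) (a : β → R) :
    ((α → R) ⧸ Submodule.span R (Set.range fun i => a i • (Pi.single (f i) 1 : α → R)))
      ≃ₗ[R] ((i : β) → R ⧸ Ideal.span {a i}) × ({x : α // x ∉ Set.range f} → R) := by
  classical
  set I : α → Submodule R R := fun x => Submodule.span R (a '' {i | f i = x}) with hI
  let e1 : ((α → R) ⧸ Submodule.span R
      (Set.range fun i => a i • (Pi.single (f i) 1 : α → R))) ≃ₗ[R]
      ((α → R) ⧸ Submodule.pi Set.univ I) :=
    Submodule.quotEquivOfEq _ _ (span_diag_eq_pi f a)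
  let e2 : ((α → R) ⧸ Submodule.pi Set.univ I) ≃ₗ[R] ((x : α) → R ⧸ I x) :=
    Submodule.quotientPi I
  let e3 : ((x : α) → R ⧸ I x) ≃ₗ[R]
      ((x : {x // x ∈ Set.range (f : β → α)}) → R ⧸ I x) ×
      ((x : {x // ¬ x ∈ Set.range (f : β → α)}) → R ⧸ I x) :=
    piSplitLequiv _ _
  let e4 : ((x : {x // x ∈ Set.range (f : β → α)}) → R ⧸ I x) ≃ₗ[R]
      ((i : β) → R ⧸ Ideal.span {a i}) :=
    (LinearEquiv.piCongrLeft R (fun x : {x // x ∈ Set.range (f : β → α)} => R ⧸ I x)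
      (Equiv.ofInjective (f : β → α) f.injective)).symm.trans
    (LinearEquiv.piCongrRight fun i =>
      Submodule.quotEquivOfEq _ _ (by show Submodule.span R (a '' {i' | f i' = f i}) = Ideal.span {a i}; rw [image_setOf_eq f a i]))
  let e5 : ((x : {x // ¬ x ∈ Set.range (f : β → α)}) → R ⧸ I x) ≃ₗ[R]
      ({x : α // x ∉ Set.range f} → R) :=
    LinearEquiv.piCongrRight fun x =>
      Submodule.quotEquivOfEqBot _ (by
        show Submodule.span R (a '' {i | f i = (x : α)}) = ⊥
        rw [image_setOf_empty f a x (by simpa [Set.mem_range] using x.2)]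
        exact Submodule.span_empty)
  exact e1.trans (e2.trans (e3.trans (LinearEquiv.prodCongr e4 e5)))


set_option maxHeartbeats 1000000 in
lemma card_compl_range {γ β : Type*} [Fintype γ] [Fintype β] [DecidableEq γ] (g : β ↪ γ) :
    Fintype.card {x : γ // x ∉ Set.range g} + Fintype.card β = Fintype.card γ := by
  classical
  have h1 : Fintype.card {x : γ // x ∈ Set.range (g : β → γ)} = Fintype.card β :=
    (Fintype.card_congr (Equiv.ofInjective (g : β → γ) g.injective)).symm
  have h2 : Fintype.card {x : γ // x ∈ Set.range (g : β → γ)} ≤ Fintype.card γ := by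
    convert Fintype.card_subtype_le (fun x => x ∈ Set.range (g : β → γ)) using 2
  rw [Fintype.card_subtype_compl, h1]
  omega

end Aux
set_option maxHeartbeats 1000000 in
/-- **Cokernels of a matrix and of its transpose.** Over a PID `R`, for a `k × n`
matrix `M`, `coker M ⊕ Rⁿ ≅ coker Mᵀ ⊕ Rᵏ` as `R`-modules; in particular if `M` is
square (`k = n`) then `coker M ≅ coker Mᵀ`. -/
theorem coker_transpose {R : Type*} [CommRing R] [IsDomain R] [IsPrincipalIdealRing R]
    {k n : ℕ} (M : Matrix (Fin k) (Fin n) R) :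
    Nonempty ((((Fin k → R) ⧸ LinearMap.range M.mulVecLin) × (Fin n → R)) ≃ₗ[R]
        (((Fin n → R) ⧸ LinearMap.range Mᵀ.mulVecLin) × (Fin k → R))) ∧
      (k = n → Nonempty (((Fin k → R) ⧸ LinearMap.range M.mulVecLin) ≃ₗ[R]
        ((Fin n → R) ⧸ LinearMap.range Mᵀ.mulVecLin))) := by
  classical
  set φ := M.mulVecLin with hφ
  set N := LinearMap.range φ with hNdef
  obtain ⟨m, ⟨bM, bN, f, a, hsnf⟩⟩ := Submodule.smithNormalForm (Pi.basisFun R (Fin k)) N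
  -- Part 1 : the cokernel of `M`
  have hN : N = Submodule.span R (Set.range fun i => a i • bM (f i)) := by
    rw [← Submodule.map_subtype_top N, ← bN.span_eq, Submodule.map_span, ← Set.range_comp]
    refine congrArg (Submodule.span R) (congrArg Set.range (funext fun i => ?_))
    simpa using hsnf i
  have hmap : Submodule.map (bM.equivFun : (Fin k → R) →ₗ[R] (Fin k → R)) N =
      Submodule.span R (Set.range fun i => a i • (Pi.single (f i) 1 : Fin k → R)) := by
    rw [hN, Submodule.map_span, ← Set.range_comp]
    refine congrArg (Submodule.span R) (congrArg Set.range (funext fun i => ?_))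
    simp only [Function.comp_apply, _root_.map_smul]
    congr 1
    funext j
    simp [Module.Basis.equivFun_apply, Module.Basis.repr_self, Finsupp.single_apply, Pi.single_apply, eq_comm]
  let eCokM : ((Fin k → R) ⧸ N) ≃ₗ[R]
      ((i : Fin m) → R ⧸ Ideal.span {a i}) × ({x : Fin k // x ∉ Set.range f} → R) :=
    (Submodule.Quotient.equiv N _ bM.equivFun hmap).trans (cokerDiagLequiv f a)
  -- Part 2 : the cokernel of `Mᵀ`
  -- a basis of the kernel
  obtain ⟨d, bK⟩ := Submodule.basisOfPid (Pi.basisFun R (Fin n)) (LinearMap.ker φ)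
  -- a splitting of the projection onto the range
  have hsurj : Function.Surjective φ.rangeRestrict := LinearMap.surjective_rangeRestrict φ
  choose x hx using fun i => hsurj (bN i)
  let s : N →ₗ[R] (Fin n → R) := Module.Basis.constr bN R x
  have hs : ∀ v : N, φ.rangeRestrict (s v) = v := by
    suffices h : φ.rangeRestrict ∘ₗ s = LinearMap.id by
      intro v
      exact DFunLike.congr_fun h v
    apply bN.ext
    intro i
    simp only [LinearMap.coe_comp, Function.comp_apply, LinearMap.id_coe, id_eq]
    rw [show s (bN i) = x i from Module.Basis.constr_basis bN R x i]
    exact hx i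
  have hφs : ∀ v : N, φ (s v) = (v : Fin k → R) := by
    intro v
    have : (φ.rangeRestrict (s v) : Fin k → R) = φ (s v) := rfl
    rw [← this, hs]
  have hker : ∀ y : Fin n → R, y - s (φ.rangeRestrict y) ∈ LinearMap.ker φ := by
    intro y
    have h1 : (φ.rangeRestrict y : Fin k → R) = φ y := rfl
    simp only [LinearMap.mem_ker, map_sub]
    rw [hφs, h1, sub_self]
  let F : (↥(LinearMap.ker φ) × ↥N) →ₗ[R] (Fin n → R) :=
    LinearMap.coprod (LinearMap.ker φ).subtype s
  let G : (Fin n → R) →ₗ[R] (↥(LinearMap.ker φ) × ↥N) :=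
    LinearMap.prod
      (LinearMap.codRestrict (LinearMap.ker φ)
        (LinearMap.id - s ∘ₗ φ.rangeRestrict) (fun y => by simpa using hker y))
      φ.rangeRestrict
  have hpsi_u : ∀ u : ↥(LinearMap.ker φ), φ.rangeRestrict (u : Fin n → R) = 0 := by
    intro u
    apply Subtype.ext
    show φ (u : Fin n → R) = 0
    exact u.2
  let E : (↥(LinearMap.ker φ) × ↥N) ≃ₗ[R] (Fin n → R) :=
    LinearEquiv.ofLinear F G
      (by
        apply LinearMap.ext
        intro y
        simp only [F, G, LinearMap.coe_comp, Function.comp_apply, LinearMap.prod_apply,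
          Pi.prod, LinearMap.coprod_apply, LinearMap.codRestrict_apply, LinearMap.sub_apply,
          LinearMap.id_apply, LinearMap.id_coe, id_eq]
        show (y - s (φ.rangeRestrict y)) + s (φ.rangeRestrict y) = y
        rw [sub_add_cancel])
      (by
        apply LinearMap.ext
        rintro ⟨u, v⟩
        have hpsi : φ.rangeRestrict ((u : Fin n → R) + s v) = v := by
          rw [map_add, hpsi_u u, hs, zero_add]
        refine Prod.ext ?_ ?_
        · apply Subtype.ext
          show ((u : Fin n → R) + s v) - s (φ.rangeRestrict ((u : Fin n → R) + s v)) = (u : Fin n → R)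
          rw [hpsi, add_sub_cancel_right]
        · show φ.rangeRestrict ((u : Fin n → R) + s v) = v
          exact hpsi)
  let c : Module.Basis (Fin d ⊕ Fin m) R (Fin n → R) := (bK.prod bN).map E
  have hc1 : ∀ i, φ (c (Sum.inl i)) = 0 := by
    intro i
    have h1 : c (Sum.inl i) = (bK i : Fin n → R) := by
      rw [Module.Basis.map_apply]
      show F ((bK.prod bN) (Sum.inl i)) = _
      rw [Module.Basis.prod_apply]
      simp [F]
    rw [h1]
    exact (bK i).2
  have hc2 : ∀ i, φ (c (Sum.inr i)) = a i • bM (f i) := by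
    intro i
    have h1 : c (Sum.inr i) = s (bN i) := by
      rw [Module.Basis.map_apply]
      show F ((bK.prod bN) (Sum.inr i)) = _
      rw [Module.Basis.prod_apply]
      simp [F]
    rw [h1, hφs, hsnf i]
  -- matrices and change of bases
  let b0n := Pi.basisFun R (Fin n)
  let b0k := Pi.basisFun R (Fin k)
  let A := LinearMap.toMatrix c bM φ
  let P := LinearMap.toMatrix bM b0k (LinearMap.id)
  let P' := LinearMap.toMatrix b0k bM (LinearMap.id)
  let Q := LinearMap.toMatrix b0n c (LinearMap.id)
  let Q' := LinearMap.toMatrix c b0n (LinearMap.id)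
  have h0 : LinearMap.toMatrix b0n b0k φ = M := by
    ext i j
    rw [LinearMap.toMatrix_apply]
    simp [b0n, b0k, hφ, Matrix.mulVecLin_apply, Matrix.mulVec_single_one]
  have hM : M = P * A * Q := by
    calc M = LinearMap.toMatrix b0n b0k φ := h0.symm
    _ = LinearMap.toMatrix b0n b0k (LinearMap.id ∘ₗ (φ ∘ₗ LinearMap.id)) := by
        rw [LinearMap.id_comp, LinearMap.comp_id]
    _ = P * LinearMap.toMatrix b0n bM (φ ∘ₗ LinearMap.id) := by
        rw [LinearMap.toMatrix_comp b0n bM b0k]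
    _ = P * (A * Q) := by rw [LinearMap.toMatrix_comp b0n c bM]
    _ = P * A * Q := by rw [Matrix.mul_assoc]
  have hMT : Mᵀ = Qᵀ * (Aᵀ * Pᵀ) := by
    rw [hM]
    simp [Matrix.transpose_mul, Matrix.mul_assoc]
  have hP'P : P' * P = 1 := by
    show LinearMap.toMatrix b0k bM LinearMap.id * LinearMap.toMatrix bM b0k LinearMap.id = 1
    rw [← LinearMap.toMatrix_comp bM b0k bM, LinearMap.id_comp, LinearMap.toMatrix_id]
  have hQQ' : Q * Q' = 1 := by
    show LinearMap.toMatrix b0n c LinearMap.id * LinearMap.toMatrix c b0n LinearMap.id = 1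
    rw [← LinearMap.toMatrix_comp c b0n c, LinearMap.id_comp, LinearMap.toMatrix_id]
  have hQ'Q : Q' * Q = 1 := by
    show LinearMap.toMatrix c b0n LinearMap.id * LinearMap.toMatrix b0n c LinearMap.id = 1
    rw [← LinearMap.toMatrix_comp b0n c b0n, LinearMap.id_comp, LinearMap.toMatrix_id]
  have hPsurj : Function.Surjective (Pᵀ.mulVecLin) := by
    have hcomp : Pᵀ.mulVecLin ∘ₗ P'ᵀ.mulVecLin = LinearMap.id := by
      rw [← Matrix.mulVecLin_mul, ← Matrix.transpose_mul, hP'P, Matrix.transpose_one,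
        Matrix.mulVecLin_one]
    intro y
    exact ⟨P'ᵀ.mulVecLin y, DFunLike.congr_fun hcomp y⟩
  let eQ : ((Fin d ⊕ Fin m) → R) ≃ₗ[R] (Fin n → R) :=
    LinearEquiv.ofLinear Qᵀ.mulVecLin Q'ᵀ.mulVecLin
      (by rw [← Matrix.mulVecLin_mul, ← Matrix.transpose_mul, hQ'Q, Matrix.transpose_one,
        Matrix.mulVecLin_one])
      (by rw [← Matrix.mulVecLin_mul, ← Matrix.transpose_mul, hQQ', Matrix.transpose_one,
        Matrix.mulVecLin_one])
  have hrange : LinearMap.range Mᵀ.mulVecLin =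
      Submodule.map Qᵀ.mulVecLin (LinearMap.range Aᵀ.mulVecLin) := by
    rw [hMT, Matrix.mulVecLin_mul, Matrix.mulVecLin_mul, LinearMap.range_comp,
      LinearMap.range_comp_of_range_eq_top _ (LinearMap.range_eq_top.mpr hPsurj)]
  -- the rows of `A`
  have hAinl : ∀ (j : Fin k) (i : Fin d), A j (Sum.inl i) = 0 := by
    intro j i
    show (LinearMap.toMatrix c bM φ) j (Sum.inl i) = 0
    rw [LinearMap.toMatrix_apply, hc1 i]
    simp
  have hAinr : ∀ (j : Fin k) (i : Fin m), A j (Sum.inr i) = a i * (if f i = j then 1 else 0) := by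
    intro j i
    show (LinearMap.toMatrix c bM φ) j (Sum.inr i) = a i * (if f i = j then 1 else 0)
    rw [LinearMap.toMatrix_apply, hc2 i]
    simp [Module.Basis.repr_self, Finsupp.single_apply]
  have hrowf : ∀ i : Fin m, A (f i) = a i • (Pi.single (Sum.inr i) 1 : (Fin d ⊕ Fin m) → R) := by
    intro i
    funext l
    rcases l with i' | i'
    · simp [hAinl, Pi.single_apply]
    · rw [hAinr]
      by_cases h : i' = i
      · subst h
        simp [Pi.single_apply]
      · have h2 : ¬ (f i' = f i) := fun hh => h (f.injective hh)
        simp [Pi.single_apply, h, h2]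
  have hrow0 : ∀ j : Fin k, (∀ i, f i ≠ j) → A j = 0 := by
    intro j h
    funext l
    rcases l with i' | i'
    · simp [hAinl]
    · rw [hAinr]
      simp [h i']
  have hA : LinearMap.range Aᵀ.mulVecLin =
      Submodule.span R (Set.range fun i : Fin m =>
        a i • (Pi.single (Sum.inr i) 1 : (Fin d ⊕ Fin m) → R)) := by
    rw [Matrix.range_mulVecLin]; change Submodule.span R (Set.range A) = _
    apply le_antisymm
    · rw [Submodule.span_le]
      rintro _ ⟨j, rfl⟩
      by_cases h : ∃ i, f i = j
      · obtain ⟨i, rfl⟩ := h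
        rw [hrowf i]
        exact Submodule.subset_span ⟨i, rfl⟩
      · push_neg at h
        rw [hrow0 j h]
        exact Submodule.zero_mem _
    · rw [Submodule.span_le]
      rintro _ ⟨i, rfl⟩
      exact Submodule.subset_span ⟨f i, hrowf i⟩
  have hmapT : Submodule.map (eQ : ((Fin d ⊕ Fin m) → R) →ₗ[R] (Fin n → R)) (LinearMap.range Aᵀ.mulVecLin) = LinearMap.range Mᵀ.mulVecLin := by
    rw [hrange]
    rfl
  let embr : Fin m ↪ (Fin d ⊕ Fin m) := ⟨Sum.inr, Sum.inr_injective⟩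
  have hAemb : LinearMap.range Aᵀ.mulVecLin =
      Submodule.span R (Set.range fun i : Fin m =>
        a i • (Pi.single (embr i) 1 : (Fin d ⊕ Fin m) → R)) := hA
  let eCokMT : ((Fin n → R) ⧸ LinearMap.range Mᵀ.mulVecLin) ≃ₗ[R]
      ((i : Fin m) → R ⧸ Ideal.span {a i}) ×
        ({x : Fin d ⊕ Fin m // x ∉ Set.range embr} → R) :=
    ((Submodule.Quotient.equiv _ _ eQ hmapT).symm).trans
      ((Submodule.quotEquivOfEq _ _ hAemb).trans (cokerDiagLequiv embr a))
  -- cardinalities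
  have hcard1 : Fintype.card {x : Fin k // x ∉ Set.range f} + m = k := by
    simpa using card_compl_range f
  have hcard2 : Fintype.card {x : Fin d ⊕ Fin m // x ∉ Set.range embr} + m = d + m := by
    simpa using card_compl_range embr
  have hn : d + m = n := by
    simpa using Fintype.card_congr (Module.Basis.indexEquiv c (Pi.basisFun R (Fin n)))
  constructor
  · refine ⟨?_⟩
    have hcards : Fintype.card ({x : Fin d ⊕ Fin m // x ∉ Set.range embr} ⊕ Fin k)
        = Fintype.card ({x : Fin k // x ∉ Set.range f} ⊕ Fin n) := by
      simp only [Fintype.card_sum, Fintype.card_fin]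
      omega
    let inner : (({x : Fin k // x ∉ Set.range f} → R) × (Fin n → R)) ≃ₗ[R]
        (({x : Fin d ⊕ Fin m // x ∉ Set.range embr} → R) × (Fin k → R)) :=
      (LinearEquiv.sumArrowLequivProdArrow _ _ R R).symm.trans
        ((LinearEquiv.funCongrLeft R R (Fintype.equivOfCardEq hcards)).trans
          (LinearEquiv.sumArrowLequivProdArrow _ _ R R))
    exact (LinearEquiv.prodCongr eCokM (LinearEquiv.refl R (Fin n → R))).trans
      ((LinearEquiv.prodAssoc R _ _ _).trans
        ((LinearEquiv.prodCongr (LinearEquiv.refl R ((i : Fin m) → R ⧸ Ideal.span {a i})) inner).trans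
          ((LinearEquiv.prodAssoc R _ _ _).symm.trans
            (LinearEquiv.prodCongr eCokMT.symm (LinearEquiv.refl R (Fin k → R))))))
  · intro hkn
    refine ⟨?_⟩
    have hcards' : Fintype.card {x : Fin d ⊕ Fin m // x ∉ Set.range embr}
        = Fintype.card {x : Fin k // x ∉ Set.range f} := by
      omega
    exact eCokM.trans
      ((LinearEquiv.prodCongr (LinearEquiv.refl R ((i : Fin m) → R ⧸ Ideal.span {a i}))
        (LinearEquiv.funCongrLeft R R (Fintype.equivOfCardEq hcards'))).trans eCokMT.symm)
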